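/- With the notation of the previous setting (σ_X² = w*²τ₂*² + τ₁*², σ_Y² = w*²y² + τ₁*², D₁₂(η) = (1/2)log(ησ_X² + (1−η)σ_Y²) − (η/2)log σ_X² − ((1−η)/2)log τ₁*², w* ≠ 0, y² ≠ τ₂*², y ≠ 0), the right derivative of D₁₂ at η = 0 is positive if and only if w*²(τ₂*² − y²)/(w*²y² + τ₁*²) > log(1 + w*²τ₂*²/τ₁*²). Consequently, when this inequality holds D₁₂ attains its maximum over [0,1] at a unique interior point η* ∈ (0,1), and when it fails D₁₂ is strictly decreasing on (0,1). -/

import Mathlib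

open Filter Set

/-- The concentration exponent `D₁₂(η)` for the true model `X(2) → X(1)`
with a fraction `η` of observational samples. -/
noncomputable def D12 (sX sY t1 : ℝ) (η : ℝ) : ℝ :=
  (1 / 2) * Real.log (η * sX + (1 - η) * sY)
    - η / 2 * Real.log sX - (1 - η) / 2 * Real.log t1

lemma hasDerivAt_D12 (sX sY t1 η : ℝ) (h : η * sX + (1 - η) * sY ≠ 0) :
    HasDerivAt (D12 sX sY t1)
      ((sX - sY) / (2 * (η * sX + (1 - η) * sY)) - Real.log sX / 2 + Real.log t1 / 2) η := by
  have hLd : HasDerivAt (fun t : ℝ => t * sX + (1 - t) * sY) (sX - sY) η := by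
    have := ((hasDerivAt_id η).mul_const sX).add
      (((hasDerivAt_const η (1:ℝ)).sub (hasDerivAt_id η)).mul_const sY)
    exact this.congr_deriv (by ring)
  have hlog := (Real.hasDerivAt_log h).comp η hLd
  have h1 : HasDerivAt (fun t : ℝ => (1/2) * Real.log (t * sX + (1 - t) * sY))
      ((1/2) * ((η * sX + (1 - η) * sY)⁻¹ * (sX - sY))) η := hlog.const_mul _
  have h2 : HasDerivAt (fun t : ℝ => t / 2 * Real.log sX) ((1/2) * Real.log sX) η := by
    simpa using ((hasDerivAt_id η).div_const 2).mul_const (Real.log sX)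
  have h3 : HasDerivAt (fun t : ℝ => (1 - t) / 2 * Real.log t1) ((0 - 1)/2 * Real.log t1) η :=
    (((hasDerivAt_const η (1:ℝ)).sub (hasDerivAt_id η)).div_const 2).mul_const (Real.log t1)
  have key := (h1.sub h2).sub h3
  exact key.congr_deriv (by rw [div_mul_eq_div_div_swap]; ring)

lemma frac_anti (sX sY : ℝ) (hne : sX ≠ sY) {a b : ℝ}
    (ha : 0 < a * sX + (1 - a) * sY) (hb : 0 < b * sX + (1 - b) * sY) (hab : a < b) :
    (sX - sY) / (2 * (b * sX + (1 - b) * sY)) < (sX - sY) / (2 * (a * sX + (1 - a) * sY)) := by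
  have hs : (sX - sY) ≠ 0 := sub_ne_zero.mpr hne
  have key : (sX - sY) / (2 * (a * sX + (1 - a) * sY)) - (sX - sY) / (2 * (b * sX + (1 - b) * sY))
      = (b - a) * (sX - sY)^2 / (2 * (a * sX + (1 - a) * sY) * (b * sX + (1 - b) * sY)) := by
    rw [div_sub_div _ _ (mul_ne_zero two_ne_zero ha.ne') (mul_ne_zero two_ne_zero hb.ne'), div_eq_div_iff (mul_ne_zero (mul_ne_zero two_ne_zero ha.ne') (mul_ne_zero two_ne_zero hb.ne')) (mul_ne_zero (mul_ne_zero two_ne_zero ha.ne') hb.ne')]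
    ring
  have hpos : 0 < (b - a) * (sX - sY)^2 / (2 * (a * sX + (1 - a) * sY) * (b * sX + (1 - b) * sY)) := by
    apply div_pos
    · exact mul_pos (by linarith) (by positivity)
    · positivity
  linarith

theorem stmt_12 (w τ1 τ2 y : ℝ) (hw : w ≠ 0) (h1 : 0 < τ1) (h2 : 0 < τ2)
    (hy : y ≠ 0) (hy2 : y ^ 2 ≠ τ2) :
    let sX := w ^ 2 * τ2 + τ1
    let sY := w ^ 2 * y ^ 2 + τ1
    (0 < derivWithin (D12 sX sY τ1) (Set.Ici 0) 0 ↔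
        w ^ 2 * (τ2 - y ^ 2) / (w ^ 2 * y ^ 2 + τ1) >
          Real.log (1 + w ^ 2 * τ2 / τ1)) ∧
      (w ^ 2 * (τ2 - y ^ 2) / (w ^ 2 * y ^ 2 + τ1) >
          Real.log (1 + w ^ 2 * τ2 / τ1) →
        ∃! η : ℝ, η ∈ Set.Ioo (0 : ℝ) 1 ∧
          ∀ x ∈ Set.Icc (0 : ℝ) 1, D12 sX sY τ1 x ≤ D12 sX sY τ1 η) ∧
      (¬ (w ^ 2 * (τ2 - y ^ 2) / (w ^ 2 * y ^ 2 + τ1) >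
          Real.log (1 + w ^ 2 * τ2 / τ1)) →
        StrictAntiOn (D12 sX sY τ1) (Set.Ioo (0 : ℝ) 1)) := by
  intro sX sY
  have hsX_def : sX = w ^ 2 * τ2 + τ1 := rfl
  have hsY_def : sY = w ^ 2 * y ^ 2 + τ1 := rfl
  have hw2 : 0 < w ^ 2 := by positivity
  have hsX : 0 < sX := by rw [hsX_def]; positivity
  have hsY : 0 < sY := by rw [hsY_def]; positivity
  have hτ1sY : τ1 < sY := by
    have : 0 < w ^ 2 * y ^ 2 := by positivity
    rw [hsY_def]; linarith
  have hne : sX ≠ sY := by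
    intro h
    have h' : w ^ 2 * τ2 = w ^ 2 * y ^ 2 := by
      rw [hsX_def] at h; rw [hsY_def] at h; linarith
    exact hy2 (mul_left_cancel₀ (by positivity) h').symm
  -- positivity of the affine combination on [0,1]
  have hL : ∀ η ∈ Icc (0:ℝ) 1, 0 < η * sX + (1 - η) * sY := by
    rintro η ⟨h0, h1'⟩
    have e1 : 0 ≤ η * sX := mul_nonneg h0 hsX.le
    have e2 : 0 ≤ (1 - η) * sY := mul_nonneg (by linarith) hsY.le
    rcases lt_or_ge η 1 with hlt | hge
    · nlinarith
    · nlinarith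
  -- derivative function
  set d : ℝ → ℝ := fun η =>
    (sX - sY) / (2 * (η * sX + (1 - η) * sY)) - Real.log sX / 2 + Real.log τ1 / 2 with hd_def
  have hder : ∀ η ∈ Icc (0:ℝ) 1, HasDerivAt (D12 sX sY τ1) (d η) η :=
    fun η hη => hasDerivAt_D12 sX sY τ1 η (hL η hη).ne'
  have h01 : (0:ℝ) ∈ Icc (0:ℝ) 1 := by norm_num
  have h11 : (1:ℝ) ∈ Icc (0:ℝ) 1 := by norm_num
  have hdw : derivWithin (D12 sX sY τ1) (Ici 0) 0 = d 0 :=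
    ((hder 0 h01).hasDerivWithinAt).derivWithin (uniqueDiffOn_Ici 0 0 self_mem_Ici)
  -- rewrite d 0
  have hd0 : d 0 = (sX - sY) / (2 * sY) - Real.log sX / 2 + Real.log τ1 / 2 := by
    simp [hd_def]
  -- log identity
  have hlog_id : Real.log (1 + w ^ 2 * τ2 / τ1) = Real.log sX - Real.log τ1 := by
    have e : 1 + w ^ 2 * τ2 / τ1 = sX / τ1 := by rw [hsX_def]; field_simp; ring
    rw [e, Real.log_div hsX.ne' h1.ne']
  have hsub : sX - sY = w ^ 2 * (τ2 - y ^ 2) := by rw [hsX_def, hsY_def]; ring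
  -- the iff
  have hiff : 0 < d 0 ↔
      w ^ 2 * (τ2 - y ^ 2) / (w ^ 2 * y ^ 2 + τ1) > Real.log (1 + w ^ 2 * τ2 / τ1) := by
    rw [hd0, hlog_id, ← hsY_def, ← hsub]
    have e : (sX - sY) / (2 * sY) = ((sX - sY) / sY) / 2 := by
      rw [div_div, mul_comm]
    rw [e]
    constructor <;> intro h <;> linarith
  refine ⟨by rw [hdw]; exact hiff, ?_, ?_⟩
  · -- existence and uniqueness of interior maximizer
    intro hC
    have hd0pos : 0 < d 0 := hiff.mpr hC
    -- d 1 < 0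
    have hd1 : d 1 < 0 := by
      have e : d 1 = (sX - sY) / (2 * sX) - Real.log sX / 2 + Real.log τ1 / 2 := by
        simp [hd_def]
      have hlogY : Real.log τ1 < Real.log sY := Real.log_lt_log h1 hτ1sY
      have hbound : Real.log (sY / sX) ≤ sY / sX - 1 :=
        Real.log_le_sub_one_of_pos (by positivity)
      rw [Real.log_div hsY.ne' hsX.ne'] at hbound
      have e2 : sY / sX - 1 = -((sX - sY) / sX) := by field_simp; ring
      have e3 : (sX - sY) / (2 * sX) = ((sX - sY) / sX) / 2 := by
        rw [div_div, mul_comm]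
      rw [e, e3]
      linarith
    -- d is strictly antitone on [0,1]
    have hanti : ∀ a ∈ Icc (0:ℝ) 1, ∀ b ∈ Icc (0:ℝ) 1, a < b → d b < d a := by
      intro a ha b hb hab
      have := frac_anti sX sY hne (hL a ha) (hL b hb) hab
      simp only [hd_def]
      linarith
    -- continuity of d on [0,1]
    have hcontd : ContinuousOn d (Icc (0:ℝ) 1) := by
      apply ContinuousOn.add
      apply ContinuousOn.sub
      · exact continuousOn_const.div (by fun_prop)
          (fun x hx => by have := hL x hx; positivity)
      · exact continuousOn_const
      · exact continuousOn_const
    -- IVT for d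
    have h0mem : (0:ℝ) ∈ Icc (d 1) (d 0) := ⟨hd1.le, hd0pos.le⟩
    obtain ⟨η, hηmem, hηd⟩ := intermediate_value_Icc' (zero_le_one) hcontd h0mem
    have hη0 : 0 < η := hηmem.1.lt_of_ne (by rintro rfl; exact hd0pos.ne' hηd)
    have hη1 : η < 1 := hηmem.2.lt_of_ne (by rintro rfl; exact hd1.ne hηd)
    -- continuity of D12
    have hcontD : ContinuousOn (D12 sX sY τ1) (Icc (0:ℝ) 1) :=
      fun x hx => (hder x hx).continuousAt.continuousWithinAt
    -- strict mono on [0, η]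
    have hIccsub : Icc (0:ℝ) η ⊆ Icc (0:ℝ) 1 := Icc_subset_Icc le_rfl hη1.le
    have hIccsub' : Icc η (1:ℝ) ⊆ Icc (0:ℝ) 1 := Icc_subset_Icc hη0.le le_rfl
    have hmono : StrictMonoOn (D12 sX sY τ1) (Icc 0 η) := by
      apply strictMonoOn_of_deriv_pos (convex_Icc 0 η) (hcontD.mono hIccsub)
      intro x hx
      rw [interior_Icc] at hx
      have hx' : x ∈ Icc (0:ℝ) 1 := ⟨hx.1.le, hx.2.le.trans hη1.le⟩
      rw [(hder x hx').deriv]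
      have := hanti x hx' η hηmem hx.2
      linarith [hηd ▸ this]
    have hantiD : StrictAntiOn (D12 sX sY τ1) (Icc η 1) := by
      apply strictAntiOn_of_deriv_neg (convex_Icc η 1) (hcontD.mono hIccsub')
      intro x hx
      rw [interior_Icc] at hx
      have hx' : x ∈ Icc (0:ℝ) 1 := ⟨hη0.le.trans hx.1.le, hx.2.le⟩
      rw [(hder x hx').deriv]
      have := hanti η hηmem x hx' hx.1
      rw [hηd] at this
      linarith
    have hηIcc0 : η ∈ Icc (0:ℝ) η := ⟨hη0.le, le_rfl⟩
    have hηIcc1 : η ∈ Icc η (1:ℝ) := ⟨le_rfl, hη1.le⟩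
    have hmax : ∀ x ∈ Icc (0:ℝ) 1, D12 sX sY τ1 x ≤ D12 sX sY τ1 η := by
      intro x hx
      rcases le_or_gt x η with hle | hlt
      · exact hmono.monotoneOn ⟨hx.1, hle⟩ hηIcc0 hle
      · exact (hantiD.antitoneOn hηIcc1 ⟨hlt.le, hx.2⟩ hlt.le)
    refine ⟨η, ⟨⟨hη0, hη1⟩, hmax⟩, ?_⟩
    rintro η' ⟨⟨hη'0, hη'1⟩, hmax'⟩
    have hη'Icc : η' ∈ Icc (0:ℝ) 1 := ⟨hη'0.le, hη'1.le⟩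
    have heq : D12 sX sY τ1 η' = D12 sX sY τ1 η :=
      le_antisymm (hmax η' hη'Icc) (hmax' η ⟨hη0.le, hη1.le⟩)
    rcases lt_trichotomy η' η with h | h | h
    · exact absurd heq (hmono ⟨hη'0.le, h.le⟩ hηIcc0 h).ne
    · exact h
    · exact absurd heq.symm (hantiD hηIcc1 ⟨h.le, hη'1.le⟩ h).ne'
  · -- strictly decreasing case
    intro hC
    have hd0 : d 0 ≤ 0 := by
      by_contra h
      exact hC (hiff.mp (lt_of_not_ge h))
    have hcontD : ContinuousOn (D12 sX sY τ1) (Ioo (0:ℝ) 1) :=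
      fun x hx => (hder x ⟨hx.1.le, hx.2.le⟩).continuousAt.continuousWithinAt
    apply strictAntiOn_of_deriv_neg (convex_Ioo 0 1) hcontD
    intro x hx
    rw [interior_Ioo] at hx
    have hx' : x ∈ Icc (0:ℝ) 1 := ⟨hx.1.le, hx.2.le⟩
    rw [(hder x hx').deriv]
    have := frac_anti sX sY hne (hL 0 h01) (hL x hx') hx.1
    simp only [hd_def] at hd0 ⊢
    simp only [zero_mul, sub_zero, zero_add, one_mul] at this hd0
    linarith
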